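/- Let μ and μ_j (j ∈ ℕ) be finite Borel measures all supported in a common closed disc D ⊂ ℂ, with μ_j → μ weakly (i.e., ∫ f dμ_j → ∫ f dμ for every continuous f on D). Fix p ∈ (0, ∞) and n ∈ ℕ, and let t_{p,n}(ν) = inf { ‖P‖_{L^p(ν)} : P monic polynomial of degree n }. Then t_{p,n}(μ_j) → t_{p,n}(μ) as j → ∞. -/

import Mathlib

open MeasureTheory Filter

/-- The `n`-th `L^p(ν)` extremal (Chebyshev) number: the infimum of `L^p(ν)` norms
over monic polynomials of degree `n`. -/
noncomputable def tpn (p : ℝ) (n : ℕ) (ν : Measure ℂ) : ℝ :=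
  sInf {t : ℝ | ∃ P : Polynomial ℂ, P.Monic ∧ P.natDegree = n ∧
    t = (∫ z, ‖P.eval z‖ ^ p ∂ν) ^ (1 / p)}

namespace Stmt13

open Metric Set Polynomial

open Classical in
noncomputable def cproj (c : ℂ) (r : ℝ) (ζ : ℂ) : ℂ :=
  if ζ ∈ closedBall c r then ζ else c + ((r / ‖ζ - c‖ : ℝ) : ℂ) * (ζ - c)

lemma cproj_mem (c : ℂ) {r : ℝ} (hr : 0 ≤ r) (ζ : ℂ) : cproj c r ζ ∈ closedBall c r := by
  unfold cproj
  classical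
  split_ifs with h
  · exact h
  · have hs : r < ‖ζ - c‖ := by
      simpa [Complex.dist_eq, mem_closedBall, not_le] using h
    have hs0 : 0 < ‖ζ - c‖ := lt_of_le_of_lt hr hs
    have : ‖((r / ‖ζ - c‖ : ℝ) : ℂ) * (ζ - c)‖ = r := by
      rw [norm_mul, Complex.norm_real, Real.norm_eq_abs, abs_of_nonneg (div_nonneg hr hs0.le),
        div_mul_cancel₀ _ hs0.ne']
    rw [mem_closedBall, Complex.dist_eq, add_sub_cancel_left, this]

lemma cproj_dist (c : ℂ) {r : ℝ} (hr : 0 ≤ r) {z : ℂ} (hz : z ∈ closedBall c r) (ζ : ℂ) :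
    dist z (cproj c r ζ) ≤ dist z ζ := by
  unfold cproj
  classical
  split_ifs with h
  · exact le_refl _
  · set s := ‖ζ - c‖ with hsdef
    have hs : r < s := by
      simpa [Complex.dist_eq, mem_closedBall, not_le] using h
    have hs0 : 0 < s := lt_of_le_of_lt hr hs
    have hzc : ‖z - c‖ ≤ r := by
      simpa [Complex.dist_eq, mem_closedBall] using hz
    have hA : ((z - c) * (starRingEnd ℂ) (ζ - c)).re ≤ r * s := by
      calc ((z - c) * (starRingEnd ℂ) (ζ - c)).re ≤ ‖(z - c) * (starRingEnd ℂ) (ζ - c)‖ :=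
        Complex.re_le_norm _
      _ = ‖z - c‖ * s := by rw [norm_mul, Complex.norm_conj]
      _ ≤ r * s := by nlinarith
    have key : Complex.normSq (z - (c + ((r / s : ℝ) : ℂ) * (ζ - c))) ≤ Complex.normSq (z - ζ) := by
      have e1 : z - (c + ((r / s : ℝ) : ℂ) * (ζ - c)) = (z - c) - ((r / s : ℝ) : ℂ) * (ζ - c) := by
        ring
      have e2 : z - ζ = (z - c) - (ζ - c) := by ring
      have hns : Complex.normSq (((r / s : ℝ) : ℂ) * (ζ - c)) = r ^ 2 := by
        rw [Complex.normSq_mul, Complex.normSq_ofReal, ← Complex.sq_norm (ζ - c), ← hsdef]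
        field_simp
      have hre : ((z - c) * (starRingEnd ℂ) (((r / s : ℝ) : ℂ) * (ζ - c))).re
          = (r / s) * ((z - c) * (starRingEnd ℂ) (ζ - c)).re := by
        rw [map_mul, Complex.conj_ofReal]
        rw [show (z - c) * (((r / s : ℝ) : ℂ) * (starRingEnd ℂ) (ζ - c))
            = ((r / s : ℝ) : ℂ) * ((z - c) * (starRingEnd ℂ) (ζ - c)) by ring]
        exact Complex.re_ofReal_mul _ _
      have hnsζ : Complex.normSq (ζ - c) = s ^ 2 := by rw [← Complex.sq_norm]
      have h1 : Complex.normSq ((z - c) - ((r / s : ℝ) : ℂ) * (ζ - c))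
          = Complex.normSq (z - c) + r ^ 2
            - 2 * ((r / s) * ((z - c) * (starRingEnd ℂ) (ζ - c)).re) := by
        rw [Complex.normSq_sub, hns, hre]
      have h2 : Complex.normSq ((z - c) - (ζ - c))
          = Complex.normSq (z - c) + s ^ 2 - 2 * ((z - c) * (starRingEnd ℂ) (ζ - c)).re := by
        rw [Complex.normSq_sub, hnsζ]
      rw [e1, e2, h1, h2]
      set A := ((z - c) * (starRingEnd ℂ) (ζ - c)).re
      have hdiv : r / s * A * s = r * A := by field_simp
      nlinarith [sq_nonneg (s - r)]
    have := Real.sqrt_le_sqrt key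
    simpa [Complex.dist_eq, Complex.norm_def] using this


noncomputable def gfun (p : ℝ) (n : ℕ) (ν : Measure ℂ) (w : Fin n → ℂ) : ℝ :=
  ∫ z, ∏ i, ‖z - w i‖ ^ p ∂ν

lemma cont_prod {p : ℝ} (hp : 0 ≤ p) {n : ℕ} (w : Fin n → ℂ) :
    Continuous fun z : ℂ => ∏ i, ‖z - w i‖ ^ p :=
  continuous_finset_prod _ fun i _ =>
    ((continuous_norm.comp (continuous_id.sub continuous_const)).rpow_const
      fun _ => Or.inr hp)

lemma cont_H {p : ℝ} (hp : 0 ≤ p) {n : ℕ} :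
    Continuous fun q : (Fin n → ℂ) × ℂ => ∏ i, ‖q.2 - q.1 i‖ ^ p :=
  continuous_finset_prod _ fun i _ =>
    ((continuous_norm.comp (continuous_snd.sub ((continuous_apply i).comp
      continuous_fst))).rpow_const fun _ => Or.inr hp)

lemma restrict_eq {c : ℂ} {r : ℝ} (ν : Measure ℂ) (hν : ν (closedBall c r)ᶜ = 0) :
    ν.restrict (closedBall c r) = ν :=
  Measure.restrict_eq_self_of_ae_mem (by rw [ae_iff, ← Set.compl_def]; exact hν)

lemma integrable_of_cont {c : ℂ} {r : ℝ} (ν : Measure ℂ) [IsFiniteMeasure ν]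
    (hν : ν (closedBall c r)ᶜ = 0) {f : ℂ → ℝ} (hf : Continuous f) : Integrable f ν := by
  rw [← restrict_eq ν hν]
  exact hf.continuousOn.integrableOn_compact (isCompact_closedBall c r)

lemma integral_mono_D {c : ℂ} {r : ℝ} (ν : Measure ℂ) [IsFiniteMeasure ν]
    (hν : ν (closedBall c r)ᶜ = 0) {f g : ℂ → ℝ} (hf : Continuous f) (hg : Continuous g)
    (hfg : ∀ z ∈ closedBall c r, f z ≤ g z) : ∫ z, f z ∂ν ≤ ∫ z, g z ∂ν := by
  refine integral_mono_ae (integrable_of_cont ν hν hf) (integrable_of_cont ν hν hg) ?_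
  rw [Filter.EventuallyLE, ae_iff]
  refine measure_mono_null (fun z hz => ?_) hν
  simp only [mem_setOf_eq, not_le] at hz
  intro hzD
  exact absurd (hfg z hzD) (not_le.mpr hz)

lemma abs_integral_sub_le {c : ℂ} {r : ℝ} (ν : Measure ℂ) [IsFiniteMeasure ν]
    (hν : ν (closedBall c r)ᶜ = 0) {f g : ℂ → ℝ} (hf : Continuous f) (hg : Continuous g)
    {b : ℝ} (hb : ∀ z ∈ closedBall c r, |f z - g z| ≤ b) :
    |∫ z, f z ∂ν - ∫ z, g z ∂ν| ≤ b * (ν univ).toReal := by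
  rw [← integral_sub (integrable_of_cont ν hν hf) (integrable_of_cont ν hν hg)]
  have h1 : |∫ z, (f z - g z) ∂ν| ≤ ∫ z, |f z - g z| ∂ν := by
    simpa [Real.norm_eq_abs] using norm_integral_le_integral_norm (μ := ν) (fun z => f z - g z)
  have h2 : ∫ z, |f z - g z| ∂ν ≤ ∫ _z, b ∂ν :=
    integral_mono_D ν hν ((hf.sub hg).abs) continuous_const hb
  have h3 : ∫ _z : ℂ, b ∂ν = b * (ν univ).toReal := by rw [integral_const, smul_eq_mul, mul_comm]; rfl
  linarith

lemma gfun_nonneg (p : ℝ) (n : ℕ) (ν : Measure ℂ) (w : Fin n → ℂ) : 0 ≤ gfun p n ν w :=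
  integral_nonneg fun z => Finset.prod_nonneg fun i _ => Real.rpow_nonneg (norm_nonneg _) _

lemma gfun_le {c : ℂ} {r : ℝ} (hr : 0 ≤ r) {p : ℝ} (hp : 0 ≤ p) {n : ℕ} (ν : Measure ℂ)
    [IsFiniteMeasure ν] (hν : ν (closedBall c r)ᶜ = 0) {w : Fin n → ℂ}
    (hw : ∀ i, w i ∈ closedBall c r) :
    gfun p n ν w ≤ ((2 * r) ^ p) ^ n * (ν univ).toReal := by
  have hb : ∀ z ∈ closedBall c r, (∏ i, ‖z - w i‖ ^ p) ≤ ((2 * r) ^ p) ^ n := by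
    intro z hz
    have : ∀ i ∈ Finset.univ, ‖z - w i‖ ^ p ≤ (2 * r) ^ p := by
      intro i _
      refine Real.rpow_le_rpow (norm_nonneg _) ?_ hp
      have h1 : dist z (w i) ≤ dist z c + dist c (w i) := dist_triangle _ _ _
      have h2 : dist z c ≤ r := mem_closedBall.mp hz
      have h3 : dist c (w i) ≤ r := by rw [dist_comm]; exact mem_closedBall.mp (hw i)
      rw [Complex.dist_eq] at h1
      linarith
    calc (∏ i, ‖z - w i‖ ^ p) ≤ ∏ _i : Fin n, (2 * r) ^ p :=
        Finset.prod_le_prod (fun i _ => Real.rpow_nonneg (norm_nonneg _) _) this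
      _ = ((2 * r) ^ p) ^ n := by rw [Finset.prod_const, Finset.card_univ, Fintype.card_fin]
  calc gfun p n ν w ≤ ∫ _z, ((2 * r) ^ p) ^ n ∂ν :=
      integral_mono_D ν hν (cont_prod hp w) continuous_const hb
    _ = ((2 * r) ^ p) ^ n * (ν univ).toReal := by rw [integral_const, smul_eq_mul, mul_comm]; rfl


lemma tpn_eq {c : ℂ} {r : ℝ} (hr : 0 ≤ r) {p : ℝ} (hp : 0 < p) (n : ℕ) (ν : Measure ℂ)
    [IsFiniteMeasure ν] (hν : ν (closedBall c r)ᶜ = 0) :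
    tpn p n ν = sInf ((fun w => gfun p n ν w ^ (1 / p)) ''
      Set.pi Set.univ (fun _ : Fin n => closedBall c r)) := by
  set D := closedBall c r with hD
  set K := Set.pi Set.univ (fun _ : Fin n => D) with hK
  set S := {t : ℝ | ∃ P : Polynomial ℂ, P.Monic ∧ P.natDegree = n ∧
    t = (∫ z, ‖P.eval z‖ ^ p ∂ν) ^ (1 / p)} with hS
  have hSne : S.Nonempty := ⟨_, X ^ n, monic_X_pow n, natDegree_X_pow n, rfl⟩
  have hS0 : ∀ t ∈ S, (0:ℝ) ≤ t := by
    rintro t ⟨P, -, -, rfl⟩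
    exact Real.rpow_nonneg
      (integral_nonneg fun z => Real.rpow_nonneg (norm_nonneg _) _) _
  have hSbdd : BddBelow S := ⟨0, hS0⟩
  have hKne : K.Nonempty := ⟨fun _ => c, fun i _ => mem_closedBall_self hr⟩
  have hA0 : ∀ t ∈ (fun w => gfun p n ν w ^ (1 / p)) '' K, (0:ℝ) ≤ t := by
    rintro t ⟨w, -, rfl⟩
    exact Real.rpow_nonneg (gfun_nonneg p n ν w) _
  have hAbdd : BddBelow ((fun w => gfun p n ν w ^ (1 / p)) '' K) := ⟨0, hA0⟩
  -- A ⊆ S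
  have hAS : (fun w => gfun p n ν w ^ (1 / p)) '' K ⊆ S := by
    rintro t ⟨w, hw, rfl⟩
    refine ⟨∏ i, (X - C (w i)), monic_prod_of_monic _ _ fun i _ => monic_X_sub_C _, ?_, ?_⟩
    · rw [natDegree_prod _ _ fun i _ => X_sub_C_ne_zero _]
      simp
    · have he : (∫ z, ‖(∏ i, (X - C (w i))).eval z‖ ^ p ∂ν) = gfun p n ν w := by
        unfold gfun
        refine integral_congr_ae (Eventually.of_forall fun z => ?_)
        simp only [eval_prod, eval_sub, eval_X, eval_C, norm_prod]
        exact (Real.finset_prod_rpow Finset.univ (fun i => ‖z - w i‖)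
          (fun i _ => norm_nonneg _) p).symm
      rw [he]
  refine le_antisymm (le_csInf (hKne.image _) fun t ht => csInf_le hSbdd (hAS ht)) ?_
  refine le_csInf hSne ?_
  rintro t ⟨P, hm, hdeg, rfl⟩
  have hsplit : P.Splits := IsAlgClosed.splits P
  have hcard : P.roots.card = n := (splits_iff_card_roots.mp hsplit).trans hdeg
  set l := P.roots.toList with hl
  have hlen : l.length = n := by rw [Multiset.length_toList, hcard]
  set w : Fin n → ℂ := fun i => cproj c r (l.get (Fin.cast hlen.symm i)) with hwdef
  have hwK : w ∈ K := fun i _ => cproj_mem c hr _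
  have habs : ∀ z : ℂ, ‖P.eval z‖ =
      ∏ i : Fin n, ‖z - l.get (Fin.cast hlen.symm i)‖ := by
    intro z
    have hP : (P.roots.map fun a => X - C a).prod = P :=
      prod_multiset_X_sub_C_of_monic_of_roots_card_eq hm (hcard.trans hdeg.symm)
    have h1 : P.eval z = (P.roots.map fun a => z - a).prod := by
      conv_lhs => rw [← hP]
      rw [eval_multiset_prod, Multiset.map_map]
      simp
    rw [h1, ← Multiset.coe_toList P.roots, ← hl]
    rw [Multiset.map_coe, Multiset.prod_coe]
    have hn : ∀ x : List ℂ, ‖x.prod‖ = (x.map (fun y => ‖y‖)).prod :=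
      fun x => map_list_prod (normHom (α := ℂ)) x
    rw [hn, List.map_map]
    have h2 : (List.map ((fun y : ℂ => ‖y‖) ∘ fun a => z - a) l) = List.ofFn
        (fun i : Fin l.length => ‖z - l.get i‖) := by
      conv_lhs => rw [← List.ofFn_get l]
      rw [List.map_ofFn]
      rfl
    rw [h2, List.prod_ofFn]
    exact (Fin.prod_congr' _ hlen.symm).symm
  have hpt : ∀ z ∈ D, (∏ i, ‖z - w i‖ ^ p) ≤ ‖P.eval z‖ ^ p := by
    intro z hz
    rw [habs z, ← Real.finset_prod_rpow Finset.univ _ (fun i _ => norm_nonneg _) p]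
    refine Finset.prod_le_prod (fun i _ => Real.rpow_nonneg (norm_nonneg _) _)
      (fun i _ => Real.rpow_le_rpow (norm_nonneg _) ?_ hp.le)
    have := cproj_dist c hr hz (l.get (Fin.cast hlen.symm i))
    simpa [Complex.dist_eq, hwdef] using this
  have hint : gfun p n ν w ≤ ∫ z, ‖P.eval z‖ ^ p ∂ν := by
    refine integral_mono_D ν hν (cont_prod hp.le w) ?_ hpt
    exact (continuous_norm.comp (Polynomial.continuous P)).rpow_const fun _ => Or.inr hp.le
  refine le_trans (csInf_le hAbdd ⟨w, hwK, rfl⟩) ?_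
  exact Real.rpow_le_rpow (gfun_nonneg p n ν w) hint (by positivity)


lemma abs_sInf_image_sub {α : Type*} {K : Set α} (hK : K.Nonempty) {f g : α → ℝ}
    (hf0 : ∀ w ∈ K, 0 ≤ f w) (hg0 : ∀ w ∈ K, 0 ≤ g w) {ε : ℝ}
    (h : ∀ w ∈ K, |f w - g w| ≤ ε) : |sInf (f '' K) - sInf (g '' K)| ≤ ε := by
  have bddf : BddBelow (f '' K) := ⟨0, by rintro t ⟨w, hw, rfl⟩; exact hf0 w hw⟩
  have bddg : BddBelow (g '' K) := ⟨0, by rintro t ⟨w, hw, rfl⟩; exact hg0 w hw⟩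
  rw [abs_le]
  constructor
  · rw [neg_le, neg_sub]
    have : sInf (g '' K) - ε ≤ sInf (f '' K) := by
      refine le_csInf (hK.image f) ?_
      rintro t ⟨w, hw, rfl⟩
      have h1 : sInf (g '' K) ≤ g w := csInf_le bddg ⟨w, hw, rfl⟩
      have h2 := abs_le.mp (h w hw)
      linarith [h2.1, h2.2]
    linarith
  · have : sInf (f '' K) - ε ≤ sInf (g '' K) := by
      refine le_csInf (hK.image g) ?_
      rintro t ⟨w, hw, rfl⟩
      have h1 : sInf (f '' K) ≤ f w := csInf_le bddf ⟨w, hw, rfl⟩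
      have h2 := abs_le.mp (h w hw)
      linarith [h2.1, h2.2]
    linarith



end Stmt13

open Stmt13 Metric Set Polynomial

/-- Continuity of the extremal numbers `t_{p,n}` under weak convergence of
finite measures supported in a common closed disc. -/
theorem stmt_13 (c : ℂ) (r : ℝ) (μ : Measure ℂ) (μs : ℕ → Measure ℂ)
    [IsFiniteMeasure μ] [∀ j, IsFiniteMeasure (μs j)]
    (hsupp : μ (Metric.closedBall c r)ᶜ = 0)
    (hsupps : ∀ j, (μs j) (Metric.closedBall c r)ᶜ = 0)
    (hweak : ∀ f : ℂ → ℝ, Continuous f →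
      Tendsto (fun j => ∫ z, f z ∂(μs j)) atTop (nhds (∫ z, f z ∂μ)))
    (p : ℝ) (hp : 0 < p) (n : ℕ) (hn : 1 ≤ n) :
    Tendsto (fun j => tpn p n (μs j)) atTop (nhds (tpn p n μ)) := by
  -- replace r by |r|
  have hsub : (Metric.closedBall c |r|)ᶜ ⊆ (Metric.closedBall c r)ᶜ :=
    compl_subset_compl.mpr (closedBall_subset_closedBall (le_abs_self r))
  have hsupp' : μ (Metric.closedBall c |r|)ᶜ = 0 := measure_mono_null hsub hsupp
  have hsupps' : ∀ j, (μs j) (Metric.closedBall c |r|)ᶜ = 0 :=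
    fun j => measure_mono_null hsub (hsupps j)
  set R := |r| with hR
  have hr : 0 ≤ R := abs_nonneg r
  set D := Metric.closedBall c R with hD
  set K := Set.pi Set.univ (fun _ : Fin n => D) with hKdef
  have hKne : K.Nonempty := ⟨fun _ => c, fun i _ => mem_closedBall_self hr⟩
  have hKc : IsCompact K := isCompact_univ_pi fun _ => isCompact_closedBall c R
  -- masses
  have hmass : Tendsto (fun j => ((μs j) univ).toReal) atTop (nhds ((μ univ).toReal)) := by
    have := hweak (fun _ => (1:ℝ)) continuous_const
    simp [integral_const, smul_eq_mul] at this; exact this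
  obtain ⟨C0, hC0⟩ := (hmass.isBoundedUnder_le).bddAbove_range
  set C := max C0 ((μ univ).toReal) + 1 with hC
  have hC1 : (1:ℝ) ≤ C := by
    have : (0:ℝ) ≤ max C0 ((μ univ).toReal) :=
      le_trans ENNReal.toReal_nonneg (le_max_right _ _)
    linarith
  have hCpos : (0:ℝ) < C := lt_of_lt_of_le one_pos hC1
  have hCj : ∀ j, ((μs j) univ).toReal ≤ C := by
    intro j
    have : ((μs j) univ).toReal ≤ C0 := hC0 ⟨j, rfl⟩
    have h2 : C0 ≤ max C0 ((μ univ).toReal) := le_max_left _ _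
    linarith
  have hCμ : (μ univ).toReal ≤ C := by
    have := le_max_right C0 ((μ univ).toReal); linarith
  set B := ((2 * R) ^ p) ^ n * C with hB
  clear_value C B
  have hBnn : 0 ≤ B := by
    rw [hB]
    have : (0:ℝ) ≤ ((2 * R) ^ p) ^ n :=
      pow_nonneg (Real.rpow_nonneg (by linarith) p) n
    nlinarith
  -- rewrite tpn via gfun
  have htpnμ : tpn p n μ = sInf ((fun w => gfun p n μ w ^ (1 / p)) '' K) :=
    tpn_eq hr hp n μ hsupp'
  have htpnμs : ∀ j, tpn p n (μs j) = sInf ((fun w => gfun p n (μs j) w ^ (1 / p)) '' K) :=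
    fun j => tpn_eq hr hp n (μs j) (hsupps' j)
  rw [Metric.tendsto_atTop]
  intro ε hε
  -- uniform continuity of rpow on [0, B+1]
  have hrpowc : Continuous fun x : ℝ => x ^ (1 / p) := by
    rw [continuous_iff_continuousAt]
    exact fun x => Real.continuousAt_rpow_const x (1 / p) (Or.inr (by positivity))
  obtain ⟨δ, hδpos, hδ⟩ := Metric.uniformContinuousOn_iff.mp
    ((isCompact_Icc (a := (0:ℝ)) (b := B + 1)).uniformContinuousOn_of_continuous
      hrpowc.continuousOn) (ε / 2) (by linarith)
  -- uniform continuity of H on K ×ˢ D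
  set q : ℝ := δ / (3 * (C + 1)) with hq
  clear_value q
  have hqpos : 0 < q := by rw [hq]; positivity
  obtain ⟨θ, hθpos, hθ⟩ := Metric.uniformContinuousOn_iff.mp
    ((hKc.prod (isCompact_closedBall c R)).uniformContinuousOn_of_continuous
      (cont_H (n := n) hp.le).continuousOn) q hqpos
  -- finite net
  obtain ⟨T, hTK, hTcov⟩ := hKc.elim_nhds_subcover (fun k => Metric.ball k θ)
    (fun k _ => Metric.ball_mem_nhds k hθpos)
  -- pointwise convergence at net points, eventually
  have hev : ∀ᶠ j in atTop, ∀ k ∈ T, |gfun p n (μs j) k - gfun p n μ k| < δ / 3 := by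
    rw [eventually_all_finset]
    intro k _
    have := Metric.tendsto_nhds.mp (hweak _ (cont_prod hp.le k)) (δ / 3) (by linarith)
    simpa [gfun, Real.dist_eq] using this
  obtain ⟨N, hN⟩ := eventually_atTop.mp hev
  refine ⟨N, fun j hj => ?_⟩
  rw [htpnμ, htpnμs j, Real.dist_eq]
  have hunif : ∀ w ∈ K, |gfun p n (μs j) w ^ (1 / p) - gfun p n μ w ^ (1 / p)| ≤ ε / 2 := by
    intro w hw
    obtain ⟨k, hkT, hk⟩ : ∃ k ∈ T, w ∈ Metric.ball k θ := by
      simpa using mem_iUnion₂.mp (hTcov hw)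
    have hkK : k ∈ K := hTK k hkT
    -- |H(w,z) - H(k,z)| ≤ q on D
    have hHb : ∀ z ∈ D, |(∏ i, ‖z - w i‖ ^ p) - ∏ i, ‖z - k i‖ ^ p| ≤ q := by
      intro z hz
      have hd : dist ((w, z) : (Fin n → ℂ) × ℂ) (k, z) < θ := by
        rw [Prod.dist_eq]
        simp only [dist_self]
        rw [max_eq_left dist_nonneg]
        exact Metric.mem_ball.mp hk
      have := hθ (w, z) (Set.mk_mem_prod hw hz) (k, z) (Set.mk_mem_prod hkK hz) hd
      rw [Real.dist_eq] at this
      exact this.le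
    have hb1 : |gfun p n (μs j) w - gfun p n (μs j) k| ≤ q * C := by
      have := abs_integral_sub_le (μs j) (hsupps' j) (cont_prod hp.le w) (cont_prod hp.le k) hHb
      refine le_trans this ?_
      exact mul_le_mul_of_nonneg_left (hCj j) hqpos.le
    have hb2 : |gfun p n μ w - gfun p n μ k| ≤ q * C := by
      have := abs_integral_sub_le μ hsupp' (cont_prod hp.le w) (cont_prod hp.le k) hHb
      refine le_trans this ?_
      exact mul_le_mul_of_nonneg_left hCμ hqpos.le
    have hb3 : |gfun p n (μs j) k - gfun p n μ k| < δ / 3 := hN j hj k hkT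
    have hqC : q * C < δ / 3 := by
      rw [hq]
      rw [div_mul_eq_mul_div, div_lt_div_iff₀ (by positivity) (by positivity)]
      nlinarith
    have hclose : |gfun p n (μs j) w - gfun p n μ w| < δ := by
      have t1 : |gfun p n (μs j) w - gfun p n μ k| ≤
          |gfun p n (μs j) w - gfun p n (μs j) k| + |gfun p n (μs j) k - gfun p n μ k| :=
        abs_sub_le _ _ _
      have t2 : |gfun p n (μs j) w - gfun p n μ w| ≤
          |gfun p n (μs j) w - gfun p n μ k| + |gfun p n μ k - gfun p n μ w| :=
        abs_sub_le _ _ _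
      rw [abs_sub_comm (gfun p n μ k)] at t2
      have e3 : (3:ℝ) * (δ/3) = δ := by ring
      linarith [t1, t2, hb1, hb2, hb3, hqC, e3]
    -- both in Icc 0 (B+1)
    have hmem1 : gfun p n (μs j) w ∈ Icc (0:ℝ) (B + 1) := by
      constructor
      · exact gfun_nonneg p n (μs j) w
      · have := gfun_le hr hp.le (μs j) (hsupps' j) (fun i => hw i (Set.mem_univ i))
        have h2 : ((2 * R) ^ p) ^ n * ((μs j) univ).toReal ≤ B := by
          rw [hB]
          exact mul_le_mul_of_nonneg_left (hCj j)
            (pow_nonneg (Real.rpow_nonneg (by linarith) p) n)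
        linarith
    have hmem2 : gfun p n μ w ∈ Icc (0:ℝ) (B + 1) := by
      constructor
      · exact gfun_nonneg p n μ w
      · have := gfun_le hr hp.le μ hsupp' (fun i => hw i (Set.mem_univ i))
        have h2 : ((2 * R) ^ p) ^ n * (μ univ).toReal ≤ B := by
          rw [hB]
          exact mul_le_mul_of_nonneg_left hCμ
            (pow_nonneg (Real.rpow_nonneg (by linarith) p) n)
        linarith
    have := hδ _ hmem1 _ hmem2 (by rw [Real.dist_eq]; exact hclose)
    rw [Real.dist_eq] at this
    exact this.le
  have := abs_sInf_image_sub hKne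
    (fun w _ => Real.rpow_nonneg (gfun_nonneg p n (μs j) w) _)
    (fun w _ => Real.rpow_nonneg (gfun_nonneg p n μ w) _) hunif
  linarith
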